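/- Let B₁ and B₂ be two complex Banach spaces carrying complex cones 𝒞₁ and 𝒞₂ arising from the real/complex cone setup (each with its own S, 𝕖, 𝕞, κ). Let L : B₁ → B₂ be a bounded complex-linear operator with L(𝒞₁) ⊂ 𝒞₂ and set Δ = sup_{x,y ∈ 𝒞₁} δ_{𝒞₂}(Lx, Ly). If Δ < ∞, then for all h, g ∈ 𝒞₁, δ_{𝒞₂}(Lh, Lg) ≤ tanh(Δ/4) · δ_{𝒞₁}(h, g). -/

import Mathlib

open Complex Set ENNReal

namespace ConeSetup

variable {B : Type*} [NormedAddCommGroup B] [NormedSpace ℝ B]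

/-- Complex scalar multiplication on the complexification `B × B`:
`(a+ib)(x,y) = (ax − by, ay + bx)`. -/
def cSmul (z : ℂ) (p : B × B) : B × B :=
  (z.re • p.1 - z.im • p.2, z.re • p.2 + z.im • p.1)

/-- The "real" norm `‖(x,y)‖_r = √(‖x‖² + ‖y‖²)` on the complexification. -/
noncomputable def rNorm (p : B × B) : ℝ :=
  Real.sqrt (‖p.1‖ ^ 2 + ‖p.2‖ ^ 2)

/-- The complexification norm `‖(x,y)‖ = sup_{θ∈[0,2π]} ‖e^{iθ}(x,y)‖_r`. -/
noncomputable def cNorm (p : B × B) : ℝ :=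
  sSup ((fun θ : ℝ => rNorm (cSmul (Complex.exp (θ * Complex.I)) p)) ''
    Set.Icc 0 (2 * Real.pi))

/-- The real cone `𝒞_ℝ = {h ≠ 0 : ℓ(h) ≥ 0 for all ℓ ∈ S}`. -/
def realCone (S : Set (B →L[ℝ] ℝ)) : Set B :=
  {h | h ≠ 0 ∧ ∀ ℓ ∈ S, 0 ≤ ℓ h}

/-- The complex cone `𝒞_ℂ = ℂ_* ⋅ (𝒞_ℝ + i 𝒞_ℝ)`. -/
def complexCone (S : Set (B →L[ℝ] ℝ)) : Set (B × B) :=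
  {p | ∃ z : ℂ, z ≠ 0 ∧ ∃ x ∈ realCone S, ∃ y ∈ realCone S, p = cSmul z (x, y)}

/-- A map `B × B → ℂ` is a (continuous) complex-linear functional for the complex
structure `cSmul`. -/
def IsCLinearFunctional (ℓ : B × B → ℂ) : Prop :=
  (∀ p q : B × B, ℓ (p + q) = ℓ p + ℓ q) ∧
  (∀ (z : ℂ) (p : B × B), ℓ (cSmul z p) = z * ℓ p) ∧
  Continuous ℓ

/-- The dual real cone `𝒞'_ℝ = {ℓ ∈ B'_ℝ : ℓ(h) ≥ 0 for all h ∈ 𝒞_ℝ}`. -/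
def dualRealCone (S : Set (B →L[ℝ] ℝ)) : Set (B →L[ℝ] ℝ) :=
  {ℓ | ∀ h ∈ realCone S, 0 ≤ ℓ h}

/-- The dual complex cone `𝒞'_ℂ = {ℓ ∈ B'_ℂ : ℓ(h) ≠ 0 for all h ∈ 𝒞_ℂ}`. -/
def dualComplexCone (S : Set (B →L[ℝ] ℝ)) : Set (B × B → ℂ) :=
  {ℓ | IsCLinearFunctional ℓ ∧ ∀ h ∈ complexCone S, ℓ h ≠ 0}

/-- The action of a real functional on the complexification: `ℓ(x+iy) = ℓ(x) + iℓ(y)`. -/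
noncomputable def cext (ℓ : B →L[ℝ] ℝ) (p : B × B) : ℂ :=
  (ℓ p.1 : ℂ) + (ℓ p.2 : ℂ) * Complex.I

/-- `𝒞̊'_ℝ = {ℓ ∈ 𝒞'_ℝ : ℓ(x) > 0 for all x ∈ 𝒞_ℝ}`. -/
def interiorDualRealCone (S : Set (B →L[ℝ] ℝ)) : Set (B →L[ℝ] ℝ) :=
  {ℓ | ℓ ∈ dualRealCone S ∧ ∀ x ∈ realCone S, 0 < ℓ x}

/-- `Ĉ'_ℂ = {±ℓ ± ip : ℓ, p ∈ 𝒞̊'_ℝ}`. -/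
def hatDualComplexCone (S : Set (B →L[ℝ] ℝ)) : Set (B × B → ℂ) :=
  {q | ∃ ℓ ∈ interiorDualRealCone S, ∃ p ∈ interiorDualRealCone S,
    ∃ ε₁ ∈ ({1, -1} : Set ℝ), ∃ ε₂ ∈ ({1, -1} : Set ℝ),
      q = fun v => (ε₁ : ℂ) * cext ℓ v + (ε₂ : ℂ) * Complex.I * cext p v}

/-- `E_𝒞(h,g) = {ℓ(h)/ℓ(g) : ℓ ∈ 𝒞'_ℂ}`. -/
def gaugeSet (S : Set (B →L[ℝ] ℝ)) (h g : B × B) : Set ℂ :=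
  {z | ∃ ℓ ∈ dualComplexCone S, z = ℓ h / ℓ g}

/-- The projective gauge
`δ_𝒞(h,g) = ln( sup_{z∈E_𝒞(h,g)} |z| / inf_{z∈E_𝒞(h,g)} |z| ) = sup_{z,w∈E_𝒞(h,g)} ln|z/w|`,
valued in `[0,∞]`. -/
noncomputable def deltaGauge (S : Set (B →L[ℝ] ℝ)) (h g : B × B) : ℝ≥0∞ :=
  ⨆ z ∈ gaugeSet S h g, ⨆ w ∈ gaugeSet S h g, ENNReal.ofReal (Real.log (‖z‖ / ‖w‖))

/-- The real/complex cone setup: a separating family `S` of functionals, an order unit `𝕖`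
whose cone norm is the norm of `B`, and a functional `𝕞` in the weak-* closed convex hull
of `ℝ₊ ⋅ S` dominating the norm on the cone. -/
structure Setup (B : Type*) [NormedAddCommGroup B] [NormedSpace ℝ B] where
  S : Set (B →L[ℝ] ℝ)
  e : B
  mm : B →L[ℝ] ℝ
  κ : ℝ
  separating : ∀ x : B, (∀ ℓ ∈ S, ℓ x = 0) → x = 0
  e_mem : e ∈ realCone S
  arch : ∀ h : B, ∃ l : ℝ, 0 ≤ l ∧ ∀ ℓ ∈ S, 0 ≤ ℓ (l • e - h)
  norm_eq : ∀ h : B,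
    ‖h‖ = sInf {l : ℝ | 0 ≤ l ∧ ∀ ℓ ∈ S, 0 ≤ ℓ (l • e - h) ∧ 0 ≤ ℓ (l • e + h)}
  κ_pos : 0 < κ
  κ_lt_one : κ < 1
  mm_e : mm e = 1
  mm_lower : ∀ h ∈ realCone S, κ * ‖h‖ ≤ mm h
  mm_star : (⇑mm : B → ℝ) ∈ closure ((fun ℓ : B →L[ℝ] ℝ => (⇑ℓ : B → ℝ)) ''
    convexHull ℝ {q : B →L[ℝ] ℝ | ∃ c : ℝ, 0 ≤ c ∧ ∃ ℓ ∈ S, q = c • ℓ})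

/-- A map between complexifications is a (continuous) complex-linear operator for the
complex structures `cSmul`. -/
def IsCLinearMap {B₁ B₂ : Type*} [NormedAddCommGroup B₁] [NormedSpace ℝ B₁]
    [NormedAddCommGroup B₂] [NormedSpace ℝ B₂]
    (L : B₁ × B₁ → B₂ × B₂) : Prop :=
  (∀ p q, L (p + q) = L p + L q) ∧
  (∀ (z : ℂ) (p), L (cSmul z p) = cSmul z (L p)) ∧
  Continuous L


section Aux

lemma cSmul_cSmul (z w : ℂ) (p : B × B) : cSmul z (cSmul w p) = cSmul (z*w) p := by
  unfold cSmul
  refine Prod.ext ?_ ?_ <;>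
    simp only [Complex.mul_re, Complex.mul_im, smul_sub, smul_add, smul_smul, sub_smul, add_smul] <;>
    abel

lemma cSmul_one (p : B × B) : cSmul 1 p = p := by
  simp [cSmul]

lemma cSmul_zero_vec (z : ℂ) : cSmul z (0 : B × B) = 0 := by
  simp [cSmul]

lemma cext_add (ℓ : B →L[ℝ] ℝ) (p q : B × B) :
    cext ℓ (p + q) = cext ℓ p + cext ℓ q := by
  simp [cext]
  push_cast
  ring

lemma cext_cSmul (ℓ : B →L[ℝ] ℝ) (z : ℂ) (p : B × B) :
    cext ℓ (cSmul z p) = z * cext ℓ p := by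
  simp only [cext, cSmul, map_sub, map_add, map_smul, smul_eq_mul]
  apply Complex.ext <;>
    simp [Complex.mul_re, Complex.mul_im] <;> ring

lemma cext_continuous (ℓ : B →L[ℝ] ℝ) : Continuous (cext ℓ) := by
  unfold cext
  fun_prop

lemma cext_fn_add (ℓ ℓ' : B →L[ℝ] ℝ) (p : B × B) :
    cext (ℓ + ℓ') p = cext ℓ p + cext ℓ' p := by
  simp [cext]
  push_cast
  ring

lemma cext_fn_smul (c : ℝ) (ℓ : B →L[ℝ] ℝ) (p : B × B) :
    cext (c • ℓ) p = (c : ℂ) * cext ℓ p := by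
  simp [cext]
  push_cast
  ring

lemma map_sub_of_add {M N : Type*} [AddCommGroup M] [AddCommGroup N] {f : M → N}
    (hadd : ∀ p q, f (p + q) = f p + f q) (p q : M) : f (p - q) = f p - f q := by
  have h := hadd (p - q) q
  rw [sub_add_cancel] at h
  rw [h]; abel

end Aux


section Dual

lemma mem_dualRealCone_of_mem_S {S : Set (B →L[ℝ] ℝ)} {ℓ : B →L[ℝ] ℝ} (hℓ : ℓ ∈ S) :
    ℓ ∈ dualRealCone S := fun h hh => hh.2 ℓ hℓ

lemma mm_interior (st : Setup B) : st.mm ∈ interiorDualRealCone st.S := by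
  constructor
  · intro h hh
    have h1 : 0 < ‖h‖ := norm_pos_iff.mpr hh.1
    have := st.mm_lower h hh
    nlinarith [st.κ_pos]
  · intro x hx
    have h1 : 0 < ‖x‖ := norm_pos_iff.mpr hx.1
    have := st.mm_lower x hx
    nlinarith [st.κ_pos]

lemma interior_smul {S : Set (B →L[ℝ] ℝ)} {c : ℝ} (hc : 0 < c) {ℓ : B →L[ℝ] ℝ}
    (hℓ : ℓ ∈ interiorDualRealCone S) : c • ℓ ∈ interiorDualRealCone S := by
  constructor
  · intro h hh
    have := hℓ.1 h hh
    simp only [ContinuousLinearMap.smul_apply, smul_eq_mul]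
    positivity
  · intro x hx
    have := hℓ.2 x hx
    simp only [ContinuousLinearMap.smul_apply, smul_eq_mul]
    positivity

lemma interior_combo {S : Set (B →L[ℝ] ℝ)} {s : ℝ} (h0 : 0 < s) (h1 : s < 1)
    {ℓ₁ ℓ₂ : B →L[ℝ] ℝ} (hℓ₁ : ℓ₁ ∈ interiorDualRealCone S)
    (hℓ₂ : ℓ₂ ∈ interiorDualRealCone S) :
    (1 - s) • ℓ₁ + s • ℓ₂ ∈ interiorDualRealCone S := by
  constructor
  · intro h hh
    have a1 := hℓ₁.1 h hh
    have a2 := hℓ₂.1 h hh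
    simp only [ContinuousLinearMap.add_apply, ContinuousLinearMap.smul_apply, smul_eq_mul]
    nlinarith
  · intro x hx
    have a1 := hℓ₁.2 x hx
    have a2 := hℓ₂.2 x hx
    simp only [ContinuousLinearMap.add_apply, ContinuousLinearMap.smul_apply, smul_eq_mul]
    nlinarith

lemma interior_S_add (st : Setup B) {ℓ : B →L[ℝ] ℝ} (hℓ : ℓ ∈ st.S) {ε : ℝ} (hε : 0 < ε) :
    ℓ + ε • st.mm ∈ interiorDualRealCone st.S := by
  have hmm := mm_interior st
  constructor
  · intro h hh
    have a1 := hh.2 ℓ hℓ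
    have a2 := hmm.2 h hh
    simp only [ContinuousLinearMap.add_apply, ContinuousLinearMap.smul_apply, smul_eq_mul]
    nlinarith
  · intro x hx
    have a1 := hx.2 ℓ hℓ
    have a2 := hmm.2 x hx
    simp only [ContinuousLinearMap.add_apply, ContinuousLinearMap.smul_apply, smul_eq_mul]
    nlinarith

/-- hat functionals are genuine elements of the dual complex cone. -/
lemma hat_subset_dual {S : Set (B →L[ℝ] ℝ)} {q : B × B → ℂ}
    (hq : q ∈ hatDualComplexCone S) : q ∈ dualComplexCone S := by
  obtain ⟨ℓ, hℓ, p, hp, ε₁, hε₁, ε₂, hε₂, rfl⟩ := hq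
  have hε₁' : ε₁ = 1 ∨ ε₁ = -1 := by simpa using hε₁
  have hε₂' : ε₂ = 1 ∨ ε₂ = -1 := by simpa using hε₂
  refine ⟨⟨fun u u' => ?_, fun z u => ?_, ?_⟩, ?_⟩
  · dsimp only
    rw [cext_add, cext_add]; ring
  · dsimp only
    rw [cext_cSmul, cext_cSmul]; ring
  · exact (continuous_const.mul (cext_continuous ℓ)).add
      (continuous_const.mul (cext_continuous p))
  · rintro v ⟨z, hz, x, hx, y, hy, rfl⟩
    dsimp only
    rw [cext_cSmul, cext_cSmul]
    have hlx := hℓ.2 x hx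
    have hly := hℓ.2 y hy
    have hpx := hp.2 x hx
    have hpy := hp.2 y hy
    have hval : (ε₁ : ℂ) * (z * cext ℓ (x, y)) + (ε₂ : ℂ) * Complex.I * (z * cext p (x, y))
        = z * ((ε₁ : ℂ) * cext ℓ (x, y) + (ε₂ : ℂ) * Complex.I * cext p (x, y)) := by ring
    rw [hval]
    apply mul_ne_zero hz
    intro hcon
    rw [Complex.ext_iff] at hcon
    simp only [cext, Complex.add_re, Complex.add_im, Complex.mul_re, Complex.mul_im,
      Complex.ofReal_re, Complex.ofReal_im, Complex.I_re, Complex.I_im, Complex.zero_re,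
      Complex.zero_im] at hcon
    obtain ⟨h1, h2⟩ := hcon
    rcases hε₁' with rfl | rfl <;> rcases hε₂' with rfl | rfl <;> nlinarith

end Dual


section Duality

set_option maxHeartbeats 1000000 in
/-- Duality: a vector on which no hat functional vanishes lies in the complex cone. -/
lemma mem_complexCone_of_hat (st : Setup B) (v : B × B)
    (hv : ∀ q ∈ hatDualComplexCone st.S, q v ≠ 0) : v ∈ complexCone st.S := by
  classical
  set Do := interiorDualRealCone st.S with hDo
  have hat_mem : ∀ ℓ ∈ Do, ∀ p ∈ Do, ∀ ε₁ ∈ ({1,-1} : Set ℝ), ∀ ε₂ ∈ ({1,-1} : Set ℝ),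
      (fun u => (ε₁:ℂ) * cext ℓ u + (ε₂:ℂ) * Complex.I * cext p u) ∈ hatDualComplexCone st.S :=
    fun ℓ hℓ p hp ε₁ h1 ε₂ h2 => ⟨ℓ, hℓ, p, hp, ε₁, h1, ε₂, h2, rfl⟩
  have one_mem : (1:ℝ) ∈ ({1,-1} : Set ℝ) := by norm_num
  have neg_mem : (-1:ℝ) ∈ ({1,-1} : Set ℝ) := by norm_num
  have hmmDo : st.mm ∈ Do := mm_interior st
  -- no functional value vanishes
  have h0 : ∀ ℓ ∈ Do, cext ℓ v ≠ 0 := by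
    intro ℓ hℓ hcon
    exact hv _ (hat_mem ℓ hℓ ℓ hℓ 1 one_mem 1 one_mem) (by simp [hcon])
  -- pairwise alignment
  have h1 : ∀ ℓ₁ ∈ Do, ∀ ℓ₂ ∈ Do,
      0 ≤ (cext ℓ₁ v * (starRingEnd ℂ) (cext ℓ₂ v)).re := by
    intro ℓ₁ hℓ₁ ℓ₂ hℓ₂
    by_contra hneg
    push_neg at hneg
    set w₁ := cext ℓ₁ v with hw₁def
    set w₂ := cext ℓ₂ v with hw₂def
    set r := (w₁ * (starRingEnd ℂ) w₂).re with hrdef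
    have hw₂ : w₂ ≠ 0 := h0 ℓ₂ hℓ₂
    have hn2 : 0 < Complex.normSq w₂ := Complex.normSq_pos.mpr hw₂
    set n2 := Complex.normSq w₂ with hn2def
    set s := (-r)/(n2 - r) with hs
    have hs0 : 0 < s := div_pos (by linarith) (by linarith)
    have hs1 : s < 1 := by rw [div_lt_one (by linarith)]; linarith
    have hmem := interior_combo hs0 hs1 hℓ₁ hℓ₂
    set ws := cext ((1-s)•ℓ₁ + s•ℓ₂) v with hws_def
    have hws : ws = ((1-s:ℝ):ℂ) * w₁ + ((s:ℝ):ℂ) * w₂ := by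
      rw [hws_def, cext_fn_add, cext_fn_smul, cext_fn_smul]
    have hws0 : ws ≠ 0 := h0 _ hmem
    have hsr : s * (n2 - r) = -r := by
      rw [hs]; exact div_mul_cancel₀ _ (by linarith)
    have hkey : (ws * (starRingEnd ℂ) w₂).re = 0 := by
      rw [hws, add_mul, mul_assoc, mul_assoc]
      rw [Complex.mul_conj]
      simp only [Complex.add_re, Complex.re_ofReal_mul, Complex.ofReal_re]
      rw [← hrdef]
      nlinarith [hsr]
    have hplane : ws * (starRingEnd ℂ) w₂ = ((ws * (starRingEnd ℂ) w₂).im : ℂ) * Complex.I := by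
      conv_lhs => rw [← Complex.re_add_im (ws * (starRingEnd ℂ) w₂)]
      rw [hkey]
      simp
    have hn2' : ((n2:ℝ):ℂ) ≠ 0 := by exact_mod_cast ne_of_gt hn2
    have himn : ws * ((n2:ℝ):ℂ) = ((ws * (starRingEnd ℂ) w₂).im : ℂ) * Complex.I * w₂ := by
      have e : ((n2:ℝ):ℂ) = (starRingEnd ℂ) w₂ * w₂ := by
        rw [mul_comm, Complex.mul_conj]
      conv_lhs => rw [e, ← mul_assoc, hplane]
    set t := (ws * (starRingEnd ℂ) w₂).im / n2 with htdef
    have hwst : ws = ((t:ℝ):ℂ) * Complex.I * w₂ := by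
      have e1 : ((t:ℝ):ℂ) * Complex.I * w₂
          = (((ws * (starRingEnd ℂ) w₂).im : ℂ) * Complex.I * w₂) / ((n2:ℝ):ℂ) := by
        rw [htdef, Complex.ofReal_div]; ring
      rw [e1, ← himn, mul_div_cancel_right₀ _ hn2']
    have ht0 : t ≠ 0 := by
      intro h
      rw [h] at hwst
      simp at hwst
      exact hws0 hwst
    rcases ht0.lt_or_gt with htneg | htpos
    · have hp2 := interior_smul (neg_pos.mpr htneg) hℓ₂
      refine hv _ (hat_mem _ hmem _ hp2 1 one_mem 1 one_mem) ?_
      rw [cext_fn_smul, ← hws_def, ← hw₂def, hwst]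
      push_cast
      ring
    · have hp2 := interior_smul htpos hℓ₂
      refine hv _ (hat_mem _ hmem _ hp2 1 one_mem (-1) neg_mem) ?_
      rw [cext_fn_smul, ← hws_def, ← hw₂def, hwst]
      push_cast
      ring
  -- normalized values
  set w₀ := cext st.mm v with hw₀def
  have hw₀ : w₀ ≠ 0 := h0 _ hmmDo
  have hn₀ : 0 < Complex.normSq w₀ := Complex.normSq_pos.mpr hw₀
  set φ : (B →L[ℝ] ℝ) → ℝ := fun ℓ => (cext ℓ v / w₀).arg with hφdef
  have hzne : ∀ ℓ ∈ Do, cext ℓ v / w₀ ≠ 0 := fun ℓ hℓ => div_ne_zero (h0 ℓ hℓ) hw₀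
  have hre_div : ∀ ℓ ∈ Do, 0 ≤ (cext ℓ v / w₀).re := by
    intro ℓ hℓ
    have e : (cext ℓ v / w₀).re = (cext ℓ v * (starRingEnd ℂ) w₀).re / Complex.normSq w₀ := by
      simp [Complex.div_re, Complex.mul_re, Complex.conj_re, Complex.conj_im]
      ring
    rw [e]
    exact div_nonneg (h1 ℓ hℓ st.mm hmmDo) hn₀.le
  have hφabs : ∀ ℓ ∈ Do, |φ ℓ| ≤ Real.pi/2 := fun ℓ hℓ =>
    Complex.abs_arg_le_pi_div_two_iff.mpr (hre_div ℓ hℓ)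
  have hpair : ∀ ℓ₁ ∈ Do, ∀ ℓ₂ ∈ Do, |φ ℓ₁ - φ ℓ₂| ≤ Real.pi/2 := by
    intro ℓ₁ hℓ₁ ℓ₂ hℓ₂
    set z₁ := cext ℓ₁ v / w₀ with hz₁def
    set z₂ := cext ℓ₂ v / w₀ with hz₂def
    have hz₁ : z₁ ≠ 0 := hzne ℓ₁ hℓ₁
    have hz₂ : z₂ ≠ 0 := hzne ℓ₂ hℓ₂
    have ha₁ : 0 < ‖z₁‖ := norm_pos_iff.mpr hz₁
    have ha₂ : 0 < ‖z₂‖ := norm_pos_iff.mpr hz₂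
    have hzz : 0 ≤ (z₁ * (starRingEnd ℂ) z₂).re := by
      have e : z₁ * (starRingEnd ℂ) z₂
          = (cext ℓ₁ v * (starRingEnd ℂ) (cext ℓ₂ v)) / ((Complex.normSq w₀ : ℝ) : ℂ) := by
        rw [hz₁def, hz₂def, map_div₀, div_mul_div_comm, Complex.mul_conj]
      rw [e, Complex.div_ofReal_re]
      exact div_nonneg (h1 ℓ₁ hℓ₁ ℓ₂ hℓ₂) hn₀.le
    have e₁re : z₁.re = ‖z₁‖ * Real.cos (φ ℓ₁) := by
      have e : Real.cos (φ ℓ₁) = z₁.re / ‖z₁‖ := by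
        simp only [hφdef]; rw [Complex.cos_arg hz₁]
      rw [e, mul_comm, div_mul_cancel₀ _ (norm_ne_zero_iff.mpr hz₁)]
    have e₁im : z₁.im = ‖z₁‖ * Real.sin (φ ℓ₁) := by
      have e : Real.sin (φ ℓ₁) = z₁.im / ‖z₁‖ := by
        simp only [hφdef]; rw [Complex.sin_arg]
      rw [e, mul_comm, div_mul_cancel₀ _ (norm_ne_zero_iff.mpr hz₁)]
    have e₂re : z₂.re = ‖z₂‖ * Real.cos (φ ℓ₂) := by
      have e : Real.cos (φ ℓ₂) = z₂.re / ‖z₂‖ := by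
        simp only [hφdef]; rw [Complex.cos_arg hz₂]
      rw [e, mul_comm, div_mul_cancel₀ _ (norm_ne_zero_iff.mpr hz₂)]
    have e₂im : z₂.im = ‖z₂‖ * Real.sin (φ ℓ₂) := by
      have e : Real.sin (φ ℓ₂) = z₂.im / ‖z₂‖ := by
        simp only [hφdef]; rw [Complex.sin_arg]
      rw [e, mul_comm, div_mul_cancel₀ _ (norm_ne_zero_iff.mpr hz₂)]
    have hre_eq : (z₁ * (starRingEnd ℂ) z₂).re
        = ‖z₁‖ * ‖z₂‖ * Real.cos (φ ℓ₁ - φ ℓ₂) := by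
      simp only [Complex.mul_re, Complex.conj_re, Complex.conj_im]
      rw [e₁re, e₁im, e₂re, e₂im, Real.cos_sub]
      ring
    have hcos : 0 ≤ Real.cos (φ ℓ₁ - φ ℓ₂) := by
      rw [hre_eq] at hzz
      by_contra hc
      push_neg at hc
      have := mul_neg_of_pos_of_neg (mul_pos ha₁ ha₂) hc
      linarith
    by_contra hgt
    push_neg at hgt
    have habs₁ := hφabs ℓ₁ hℓ₁
    have habs₂ := hφabs ℓ₂ hℓ₂
    have hlt : |φ ℓ₁ - φ ℓ₂| < Real.pi + Real.pi/2 := by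
      have := abs_sub (φ ℓ₁) (φ ℓ₂)
      have hπ := Real.pi_pos
      calc |φ ℓ₁ - φ ℓ₂| ≤ |φ ℓ₁| + |φ ℓ₂| := abs_sub _ _
        _ < Real.pi + Real.pi/2 := by linarith
    have := Real.cos_neg_of_pi_div_two_lt_of_lt hgt hlt
    rw [Real.cos_abs] at this
    linarith
  -- infimum of arguments
  set Φ := φ '' Do with hΦdef
  have hΦne : Φ.Nonempty := ⟨φ st.mm, Set.mem_image_of_mem _ hmmDo⟩
  have hΦbdd : BddBelow Φ := by
    refine ⟨-(Real.pi/2), ?_⟩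
    rintro r ⟨ℓ, hℓ, rfl⟩
    have := abs_le.mp (hφabs ℓ hℓ)
    linarith [this.1]
  set θ := sInf Φ with hθdef
  have hθle : ∀ ℓ ∈ Do, θ ≤ φ ℓ := fun ℓ hℓ => csInf_le hΦbdd (Set.mem_image_of_mem _ hℓ)
  have hleθ : ∀ ℓ ∈ Do, φ ℓ ≤ θ + Real.pi/2 := by
    intro ℓ hℓ
    have hmin : φ ℓ - Real.pi/2 ≤ θ := by
      apply le_csInf hΦne
      rintro r ⟨ℓ₂, hℓ₂, rfl⟩
      have := abs_le.mp (hpair ℓ hℓ ℓ₂ hℓ₂)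
      linarith [this.2]
    linarith
  -- rotate
  set c := Complex.exp (((-θ : ℝ) : ℂ) * Complex.I) / w₀ with hcdef
  have hc : c ≠ 0 := div_ne_zero (Complex.exp_ne_zero _) hw₀
  set x' := (cSmul c v).1 with hx'def
  set y' := (cSmul c v).2 with hy'def
  have heval : ∀ ℓ ∈ Do, cext ℓ (cSmul c v)
      = ((‖cext ℓ v / w₀‖ : ℝ) : ℂ) * Complex.exp (((φ ℓ - θ : ℝ) : ℂ) * Complex.I) := by
    intro ℓ hℓ
    have e2 : cext ℓ v / w₀
        = ((‖cext ℓ v / w₀‖ : ℝ) : ℂ) * Complex.exp (((φ ℓ : ℝ) : ℂ) * Complex.I) := by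
      conv_lhs => rw [← Complex.norm_mul_exp_arg_mul_I (cext ℓ v / w₀)]
    rw [cext_cSmul, hcdef]
    calc Complex.exp (((-θ : ℝ) : ℂ) * Complex.I) / w₀ * cext ℓ v
        = Complex.exp (((-θ : ℝ) : ℂ) * Complex.I) * (cext ℓ v / w₀) := by ring
      _ = ((‖cext ℓ v / w₀‖ : ℝ) : ℂ) *
            (Complex.exp (((-θ : ℝ) : ℂ) * Complex.I) * Complex.exp (((φ ℓ : ℝ) : ℂ) * Complex.I)) := by
          conv_lhs => rw [e2]
          ring
      _ = ((‖cext ℓ v / w₀‖ : ℝ) : ℂ) * Complex.exp (((φ ℓ - θ : ℝ) : ℂ) * Complex.I) := by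
          rw [← Complex.exp_add]
          congr 1
          push_cast
          ring
  -- coordinates are nonnegative for interior functionals
  have hcoord : ∀ ℓ ∈ Do, 0 ≤ ℓ x' ∧ 0 ≤ ℓ y' := by
    intro ℓ hℓ
    have hrange1 : 0 ≤ φ ℓ - θ := by have := hθle ℓ hℓ; linarith
    have hrange2 : φ ℓ - θ ≤ Real.pi/2 := by have := hleθ ℓ hℓ; linarith
    have habs := norm_nonneg (cext ℓ v / w₀)
    have hcos : 0 ≤ Real.cos (φ ℓ - θ) :=
      Real.cos_nonneg_of_mem_Icc ⟨by linarith [Real.pi_pos], hrange2⟩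
    have hsin : 0 ≤ Real.sin (φ ℓ - θ) :=
      Real.sin_nonneg_of_nonneg_of_le_pi hrange1 (by linarith [Real.pi_pos])
    have he := heval ℓ hℓ
    have hre : ℓ x' = ‖cext ℓ v / w₀‖ * Real.cos (φ ℓ - θ) := by
      have e0 : (cext ℓ (cSmul c v)).re = ℓ (cSmul c v).1 := by simp [cext]
      rw [hx'def, ← e0, he, Complex.re_ofReal_mul, Complex.exp_ofReal_mul_I_re]
    have him : ℓ y' = ‖cext ℓ v / w₀‖ * Real.sin (φ ℓ - θ) := by
      have e0 : (cext ℓ (cSmul c v)).im = ℓ (cSmul c v).2 := by simp [cext]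
      rw [hy'def, ← e0, he, Complex.im_ofReal_mul, Complex.exp_ofReal_mul_I_im]
    exact ⟨by rw [hre]; exact mul_nonneg habs hcos, by rw [him]; exact mul_nonneg habs hsin⟩
  -- extend nonnegativity to S
  have hS : ∀ ℓ ∈ st.S, 0 ≤ ℓ x' ∧ 0 ≤ ℓ y' := by
    intro ℓ hℓ
    have hmmx := (hcoord st.mm hmmDo).1
    have hmmy := (hcoord st.mm hmmDo).2
    constructor
    · by_contra hlt
      push_neg at hlt
      set ε := (-(ℓ x')) / (st.mm x' + 1) with hε
      have hε0 : 0 < ε := div_pos (by linarith) (by linarith)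
      have hmem := interior_S_add st hℓ hε0
      have hpos := (hcoord _ hmem).1
      simp only [ContinuousLinearMap.add_apply, ContinuousLinearMap.coe_smul',
        Pi.smul_apply, smul_eq_mul] at hpos
      have heq : ε * (st.mm x' + 1) = -(ℓ x') := by
        rw [hε]; exact div_mul_cancel₀ _ (by linarith)
      nlinarith
    · by_contra hlt
      push_neg at hlt
      set ε := (-(ℓ y')) / (st.mm y' + 1) with hε
      have hε0 : 0 < ε := div_pos (by linarith) (by linarith)
      have hmem := interior_S_add st hℓ hε0
      have hpos := (hcoord _ hmem).2
      simp only [ContinuousLinearMap.add_apply, ContinuousLinearMap.coe_smul',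
        Pi.smul_apply, smul_eq_mul] at hpos
      have heq : ε * (st.mm y' + 1) = -(ℓ y') := by
        rw [hε]; exact div_mul_cancel₀ _ (by linarith)
      nlinarith
  -- assemble cone membership
  have hvc : cSmul c⁻¹ (cSmul c v) = v := by
    rw [cSmul_cSmul, inv_mul_cancel₀ hc, cSmul_one]
  have hpair_eta : ((x', y') : B × B) = cSmul c v := rfl
  by_cases hx0 : x' = 0
  · by_cases hy0 : y' = 0
    · exfalso
      have hv0 : cSmul c v = 0 := by
        rw [← hpair_eta, hx0, hy0]; rfl
      have hvz : v = 0 := by rw [← hvc, hv0, cSmul_zero_vec]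
      apply hw₀
      rw [hw₀def, hvz]
      simp [cext]
    · have hyS : y' ∈ realCone st.S := ⟨hy0, fun ℓ hℓ => (hS ℓ hℓ).2⟩
      have hz0 : ((1 + Complex.I)/2 : ℂ) ≠ 0 := by
        intro hcon
        rw [Complex.ext_iff] at hcon
        simp [Complex.div_re] at hcon
      refine ⟨c⁻¹ * ((1 + Complex.I)/2), mul_ne_zero (inv_ne_zero hc) hz0, y', hyS, y', hyS, ?_⟩
      have hre2 : ((1 + Complex.I)/2 : ℂ).re = 1/2 := by
        simp [Complex.div_re, Complex.normSq]
      have him2 : ((1 + Complex.I)/2 : ℂ).im = 1/2 := by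
        simp [Complex.div_im, Complex.normSq]
      have h1 : cSmul ((1 + Complex.I)/2) ((y', y') : B × B) = ((0 : B), y') := by
        unfold cSmul
        rw [hre2, him2]
        refine Prod.ext ?_ ?_
        · simp
        · show (1/2 : ℝ) • y' + (1/2 : ℝ) • y' = y'
          module
      rw [← cSmul_cSmul, h1]
      have h2 : (((0 : B), y') : B × B) = cSmul c v := by rw [← hpair_eta, hx0]
      rw [h2, hvc]
  · by_cases hy0 : y' = 0
    · have hxS : x' ∈ realCone st.S := ⟨hx0, fun ℓ hℓ => (hS ℓ hℓ).1⟩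
      have hz0 : ((1 - Complex.I)/2 : ℂ) ≠ 0 := by
        intro hcon
        rw [Complex.ext_iff] at hcon
        simp [Complex.div_re] at hcon
      refine ⟨c⁻¹ * ((1 - Complex.I)/2), mul_ne_zero (inv_ne_zero hc) hz0, x', hxS, x', hxS, ?_⟩
      have hre2 : ((1 - Complex.I)/2 : ℂ).re = 1/2 := by
        simp [Complex.div_re, Complex.normSq]
      have him2 : ((1 - Complex.I)/2 : ℂ).im = -(1/2) := by
        simp [Complex.div_im, Complex.normSq]
        norm_num
      have h1 : cSmul ((1 - Complex.I)/2) ((x', x') : B × B) = (x', (0 : B)) := by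
        unfold cSmul
        rw [hre2, him2]
        refine Prod.ext ?_ ?_
        · show (1/2 : ℝ) • x' - (-(1/2) : ℝ) • x' = x'
          module
        · show (1/2 : ℝ) • x' + (-(1/2) : ℝ) • x' = 0
          module
      rw [← cSmul_cSmul, h1]
      have h2 : ((x', (0 : B)) : B × B) = cSmul c v := by rw [← hpair_eta, hy0]
      rw [h2, hvc]
    · refine ⟨c⁻¹, inv_ne_zero hc, x', ⟨hx0, fun ℓ hℓ => (hS ℓ hℓ).1⟩, y',
        ⟨hy0, fun ℓ hℓ => (hS ℓ hℓ).2⟩, ?_⟩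
      rw [hpair_eta, hvc]

end Duality


section RealLemmas

lemma artanh_scale {c t : ℝ} (hc0 : 0 ≤ c) (hc1 : c ≤ 1) (ht0 : 0 ≤ t) (ht1 : t < 1) :
    Real.log (1 + c*t) - Real.log (1 - c*t) ≤ c * (Real.log (1+t) - Real.log (1-t)) := by
  have hct : |c*t| < 1 := by
    rw [_root_.abs_of_nonneg (by positivity : (0:ℝ) ≤ c*t)]
    nlinarith
  have ht : |t| < 1 := by rwa [_root_.abs_of_nonneg ht0]
  have S1 := Real.hasSum_log_sub_log_of_abs_lt_one hct
  have S2 := (Real.hasSum_log_sub_log_of_abs_lt_one ht).mul_left c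
  refine hasSum_le (fun k => ?_) S1 S2
  have h1 : (c*t) ^ (2*k+1) = c^(2*k+1) * t^(2*k+1) := mul_pow _ _ _
  have h2 : c^(2*k+1) ≤ c := by
    simpa using pow_le_pow_of_le_one hc0 hc1 (Nat.one_le_iff_ne_zero.mpr (by omega))
  have h3 : (0:ℝ) ≤ t^(2*k+1) := by positivity
  have h4 : (0:ℝ) ≤ 2 * (1 / (2 * (k:ℝ) + 1)) := by positivity
  calc 2 * (1 / (2 * (k:ℝ) + 1)) * (c*t) ^ (2*k+1)
      = 2 * (1 / (2 * (k:ℝ) + 1)) * (c^(2*k+1) * t^(2*k+1)) := by rw [h1]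
    _ ≤ 2 * (1 / (2 * (k:ℝ) + 1)) * (c * t^(2*k+1)) := by
        apply mul_le_mul_of_nonneg_left _ h4
        exact mul_le_mul_of_nonneg_right h2 h3
    _ = c * (2 * (1 / (2 * (k:ℝ) + 1)) * t ^ (2*k+1)) := by ring

lemma tanh_eq_exp (x : ℝ) :
    Real.tanh x = (Real.exp (2*x) - 1) / (Real.exp (2*x) + 1) := by
  have hu : 0 < Real.exp x := Real.exp_pos x
  have h2 : Real.exp (2*x) = Real.exp x * Real.exp x := by
    rw [two_mul, Real.exp_add]
  rw [Real.tanh_eq_sinh_div_cosh, Real.sinh_eq, Real.cosh_eq, h2, Real.exp_neg]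
  rw [div_div_div_eq]
  field_simp

lemma tanh_nonneg' {x : ℝ} (hx : 0 ≤ x) : 0 ≤ Real.tanh x := by
  rw [tanh_eq_exp]
  have h1 : 1 ≤ Real.exp (2*x) := Real.one_le_exp (by linarith)
  have h2 : (0:ℝ) < Real.exp (2*x) + 1 := by positivity
  exact div_nonneg (by linarith) h2.le

set_option maxHeartbeats 1000000 in
/-- The 1-D Birkhoff-type estimate. -/
lemma key_ineq {a b P Q Θ : ℝ} (ha : 0 < a) (haQ : a < Q) (hQP : Q < P) (hPb : P < b)
    (hΘ : 0 ≤ Θ) (hcr : (P - a)*(b - Q) ≤ Real.exp Θ * ((Q - a)*(b - P))) :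
    Real.log (P/Q) ≤ Real.tanh (Θ/4) * Real.log (b/a) := by
  have hQ : 0 < Q := ha.trans haQ
  have hP : 0 < P := hQ.trans hQP
  have hb : 0 < b := hP.trans hPb
  set m : ℝ := Real.exp (Θ/2) with hm_def
  have hm1 : 1 ≤ m := Real.one_le_exp (by positivity)
  have hm0 : 0 < m := lt_of_lt_of_le one_pos hm1
  have hK : Real.exp Θ = m^2 := by
    rw [hm_def, sq, ← Real.exp_add]; norm_num
  set α : ℝ := Real.sqrt a with hα_def
  set β : ℝ := Real.sqrt b with hβ_def
  have hα : 0 < α := Real.sqrt_pos.mpr ha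
  have hβ : 0 < β := Real.sqrt_pos.mpr hb
  have ha2 : α^2 = a := Real.sq_sqrt ha.le
  have hb2 : β^2 = b := Real.sq_sqrt hb.le
  have hαβ : α < β := by
    have := Real.sqrt_lt_sqrt ha.le (by linarith : a < b)
    simpa [hα_def, hβ_def] using this
  set N : ℝ := α + β*m with hN_def
  set D : ℝ := β + α*m with hD_def
  have hN : 0 < N := by positivity
  have hD : 0 < D := by positivity
  have claim1 : P * D^2 ≤ Q * N^2 := by
    by_contra hcon
    push_neg at hcon
    have hcr' : (P - a)*(b - Q) ≤ m^2 * ((Q - a)*(b - P)) := by rwa [hK] at hcr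
    have hid : ((P - a)*(b - Q) - m^2*((Q - a)*(b - P)))*D^2 =
        (m^2 - 1)*(N*Q - α*β*D)^2 + (P*D^2 - Q*N^2)*((b - Q) + m^2*(Q - a)) := by
      rw [← ha2, ← hb2, hN_def, hD_def]; ring
    have h1 : ((P-a)*(b-Q) - m^2*((Q-a)*(b-P))) * D^2 ≤ 0 :=
      mul_nonpos_of_nonpos_of_nonneg (by linarith) (sq_nonneg D)
    have h2 : 0 ≤ (m^2-1)*(N*Q - α*β*D)^2 :=
      mul_nonneg (by nlinarith) (sq_nonneg _)
    have h3 : 0 < (P*D^2 - Q*N^2) * ((b - Q) + m^2*(Q - a)) :=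
      mul_pos (by linarith) (by nlinarith)
    linarith [hid, h1, h2, h3]
  have claim2 : Real.log (P/Q) ≤ 2 * (Real.log N - Real.log D) := by
    have h1 : P/Q ≤ N^2/D^2 := by
      rw [div_le_div_iff₀ hQ (by positivity)]
      linear_combination claim1
    have h2 : Real.log (P/Q) ≤ Real.log (N^2/D^2) :=
      Real.log_le_log (by positivity) h1
    calc Real.log (P/Q) ≤ Real.log (N^2/D^2) := h2
      _ = 2 * (Real.log N - Real.log D) := by
          rw [Real.log_div (by positivity) (by positivity), Real.log_pow, Real.log_pow]
          push_cast; ring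
  set c : ℝ := (m - 1)/(m + 1) with hc_def
  set t : ℝ := (β - α)/(β + α) with ht_def
  have hc0 : 0 ≤ c := by
    apply div_nonneg <;> linarith
  have hc1 : c ≤ 1 := by
    rw [div_le_one (by linarith)]; linarith
  have ht0 : 0 ≤ t := by
    apply div_nonneg <;> linarith
  have ht1 : t < 1 := by
    rw [div_lt_one (by linarith)]; linarith
  have hden : (0:ℝ) < (m+1)*(β+α) := by positivity
  have e1 : 1 + c*t = 2*N / ((m+1)*(β+α)) := by
    rw [hc_def, ht_def, hN_def]; field_simp; ring
  have e2 : 1 - c*t = 2*D / ((m+1)*(β+α)) := by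
    rw [hc_def, ht_def, hD_def]; field_simp; ring
  have e3 : 1 + t = 2*β / (β+α) := by
    rw [ht_def]; field_simp; ring
  have e4 : 1 - t = 2*α / (β+α) := by
    rw [ht_def]; field_simp; ring
  have hlogND : Real.log N - Real.log D = Real.log (1 + c*t) - Real.log (1 - c*t) := by
    rw [e1, e2, Real.log_div (by positivity) (by positivity),
        Real.log_div (by positivity) (by positivity),
        Real.log_mul (by norm_num) (ne_of_gt hN), Real.log_mul (by norm_num) (ne_of_gt hD)]
    ring
  have hlogβα : Real.log (1+t) - Real.log (1-t) = Real.log β - Real.log α := by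
    rw [e3, e4, Real.log_div (by positivity) (by positivity),
        Real.log_div (by positivity) (by positivity),
        Real.log_mul (by norm_num) (ne_of_gt hβ), Real.log_mul (by norm_num) (ne_of_gt hα)]
    ring
  have claim3 : Real.log N - Real.log D ≤ c * (Real.log β - Real.log α) := by
    rw [hlogND, ← hlogβα]
    exact artanh_scale hc0 hc1 ht0 ht1
  have htanh : Real.tanh (Θ/4) = c := by
    rw [tanh_eq_exp, show 2*(Θ/4) = Θ/2 by ring, ← hm_def, hc_def]
  have hba : Real.log (b/a) = 2*(Real.log β - Real.log α) := by
    rw [Real.log_div (ne_of_gt hb) (ne_of_gt ha), ← ha2, ← hb2, Real.log_pow, Real.log_pow]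
    push_cast; ring
  rw [htanh, hba]
  calc Real.log (P/Q) ≤ 2 * (Real.log N - Real.log D) := claim2
    _ ≤ 2 * (c * (Real.log β - Real.log α)) := by linarith
    _ = c * (2*(Real.log β - Real.log α)) := by ring

end RealLemmas

section Glue

lemma pair_le_delta {S : Set (B →L[ℝ] ℝ)} {h g : B × B} {z w : ℂ}
    (hz : z ∈ gaugeSet S h g) (hw : w ∈ gaugeSet S h g) :
    ENNReal.ofReal (Real.log (‖z‖ / ‖w‖)) ≤ deltaGauge S h g := by
  unfold deltaGauge
  exact le_trans (le_iSup₂ (f := fun w _ => ENNReal.ofReal (Real.log (‖z‖ / ‖w‖))) w hw)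
    (le_iSup₂ (f := fun z _ => ⨆ w ∈ gaugeSet S h g, ENNReal.ofReal (Real.log (‖z‖ / ‖w‖))) z hz)

lemma delta_le {S : Set (B →L[ℝ] ℝ)} {h g : B × B} {K : ℝ≥0∞}
    (hK : ∀ z ∈ gaugeSet S h g, ∀ w ∈ gaugeSet S h g,
      ENNReal.ofReal (Real.log (‖z‖/‖w‖)) ≤ K) : deltaGauge S h g ≤ K :=
  iSup₂_le fun z hz => iSup₂_le fun w hw => hK z hz w hw

lemma comp_mem_dual {B₁ B₂ : Type*} [NormedAddCommGroup B₁] [NormedSpace ℝ B₁]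
    [NormedAddCommGroup B₂] [NormedSpace ℝ B₂]
    {S₁ : Set (B₁ →L[ℝ] ℝ)} {S₂ : Set (B₂ →L[ℝ] ℝ)}
    {L : B₁ × B₁ → B₂ × B₂} (hL : IsCLinearMap L)
    (hLcone : ∀ p ∈ complexCone S₁, L p ∈ complexCone S₂)
    {ℓ : B₂ × B₂ → ℂ} (hℓ : ℓ ∈ dualComplexCone S₂) :
    (fun p => ℓ (L p)) ∈ dualComplexCone S₁ := by
  obtain ⟨⟨hadd, hsmul, hcont⟩, hne⟩ := hℓ
  obtain ⟨hLadd, hLsmul, hLcont⟩ := hL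
  exact ⟨⟨fun p q => by dsimp only; rw [hLadd, hadd],
    fun zz p => by dsimp only; rw [hLsmul, hsmul], hcont.comp hLcont⟩,
    fun u hu => hne _ (hLcone u hu)⟩

lemma ratio_helper {Ba Bb n11 n12 n21 n22 : ℝ} (hBa : Ba ≠ 0) (hBb : Bb ≠ 0)
    (h12 : n12 ≠ 0) (h21 : n21 ≠ 0) (h22 : n22 ≠ 0) :
    (Ba*n11/(Ba*n12))/((Bb*n21)/(Bb*n22)) = (n11*n22)/(n12*n21) := by
  field_simp

end Glue

set_option maxHeartbeats 2000000 in
/-- **Theorem 5.16 (complex cone contraction).** If a bounded complex-linear operator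
`L` maps `𝒞₁` into `𝒞₂` and `Δ = sup_{x,y∈𝒞₁} δ_{𝒞₂}(Lx, Ly) < ∞`, then for all
`h, g ∈ 𝒞₁`, `δ_{𝒞₂}(Lh, Lg) ≤ tanh(Δ/4) δ_{𝒞₁}(h, g)`. -/
theorem complex_cone_contraction {B₁ B₂ : Type*}
    [NormedAddCommGroup B₁] [NormedSpace ℝ B₁] [CompleteSpace B₁]
    [NormedAddCommGroup B₂] [NormedSpace ℝ B₂] [CompleteSpace B₂]
    (st₁ : Setup B₁) (st₂ : Setup B₂)
    (L : B₁ × B₁ → B₂ × B₂) (hL : IsCLinearMap L)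
    (hLcone : ∀ p ∈ complexCone st₁.S, L p ∈ complexCone st₂.S)
    (Δ : ℝ≥0∞)
    (hΔdef : Δ = ⨆ x ∈ complexCone st₁.S, ⨆ y ∈ complexCone st₁.S,
      deltaGauge st₂.S (L x) (L y))
    (hΔfin : Δ ≠ ⊤) :
    ∀ h ∈ complexCone st₁.S, ∀ g ∈ complexCone st₁.S,
      deltaGauge st₂.S (L h) (L g) ≤
        ENNReal.ofReal (Real.tanh (Δ.toReal / 4)) * deltaGauge st₁.S h g := by
  intro h hh g hg
  have hLh := hLcone h hh
  have hLg := hLcone g hg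
  have hdelta_le_Delta : ∀ x ∈ complexCone st₁.S, ∀ y ∈ complexCone st₁.S,
      deltaGauge st₂.S (L x) (L y) ≤ Δ := by
    intro x hx y hy
    rw [hΔdef]
    exact le_trans (le_iSup₂ (f := fun y _ => deltaGauge st₂.S (L x) (L y)) y hy)
      (le_iSup₂ (f := fun x _ => ⨆ y ∈ complexCone st₁.S, deltaGauge st₂.S (L x) (L y)) x hx)
  by_cases hΔ0 : Δ = 0
  · refine le_trans (hdelta_le_Delta h hh g hg) ?_
    rw [hΔ0]
    exact zero_le
  set Θ := Δ.toReal with hΘdef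
  have hΘ0 : 0 < Θ := ENNReal.toReal_pos hΔ0 hΔfin
  have htanh0 : 0 < Real.tanh (Θ/4) := by
    rw [tanh_eq_exp]
    have h1 : 1 < Real.exp (2*(Θ/4)) := Real.one_lt_exp_iff.mpr (by linarith)
    have h2 : (0:ℝ) < Real.exp (2*(Θ/4)) + 1 := by positivity
    exact div_pos (by linarith) h2
  by_cases hdtop : deltaGauge st₁.S h g = ⊤
  · rw [hdtop, ENNReal.mul_top (ENNReal.ofReal_pos.mpr htanh0).ne']
    exact le_top
  apply delta_le
  intro z hz w hw
  obtain ⟨ℓa, hℓa, hzeq⟩ := hz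
  obtain ⟨ℓb, hℓb, hweq⟩ := hw
  by_cases hlog : Real.log (‖z‖/‖w‖) ≤ 0
  · rw [ENNReal.ofReal_eq_zero.mpr hlog]
    exact zero_le
  push_neg at hlog
  have hℓa' : (fun p => ℓa (L p)) ∈ dualComplexCone st₁.S := comp_mem_dual hL hLcone hℓa
  have hℓb' : (fun p => ℓb (L p)) ∈ dualComplexCone st₁.S := comp_mem_dual hL hLcone hℓb
  have hzE : z ∈ gaugeSet st₁.S h g := ⟨_, hℓa', hzeq⟩
  have hwE : w ∈ gaugeSet st₁.S h g := ⟨_, hℓb', hweq⟩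
  have hah : ℓa (L h) ≠ 0 := hℓa.2 _ hLh
  have hag : ℓa (L g) ≠ 0 := hℓa.2 _ hLg
  have hbh : ℓb (L h) ≠ 0 := hℓb.2 _ hLh
  have hbg : ℓb (L g) ≠ 0 := hℓb.2 _ hLg
  have hz0 : z ≠ 0 := by rw [hzeq]; exact div_ne_zero hah hag
  have hw0 : w ≠ 0 := by rw [hweq]; exact div_ne_zero hbh hbg
  set P := ‖z‖ with hPdef
  set Q := ‖w‖ with hQdef
  have hP : 0 < P := norm_pos_iff.mpr hz0
  have hQ : 0 < Q := norm_pos_iff.mpr hw0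
  have hQP : Q < P := by
    by_contra hc
    push_neg at hc
    have : Real.log (P/Q) ≤ 0 := Real.log_nonpos (by positivity) (by
      rw [div_le_one hQ]; exact hc)
    linarith
  set dE := deltaGauge st₁.S h g with hdEdef
  set d := dE.toReal with hd
  have hd0 : 0 ≤ d := ENNReal.toReal_nonneg
  have hpairE : ∀ u ∈ gaugeSet st₁.S h g, ∀ u' ∈ gaugeSet st₁.S h g,
      Real.log (‖u‖/‖u'‖) ≤ d := by
    intro u hu u' hu'
    have h1 := pair_le_delta hu hu'
    rw [← hdEdef, ← ENNReal.ofReal_toReal hdtop, ← hd] at h1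
    by_cases hc : Real.log (‖u‖/‖u'‖) ≤ 0
    · linarith
    · exact (ENNReal.ofReal_le_ofReal_iff hd0).mp h1
  have hEpos : ∀ u ∈ gaugeSet st₁.S h g, 0 < ‖u‖ := by
    rintro u ⟨ℓc, hℓc, rfl⟩
    have h1 : ℓc h ≠ 0 := hℓc.2 h hh
    have h2 : ℓc g ≠ 0 := hℓc.2 g hg
    exact norm_pos_iff.mpr (div_ne_zero h1 h2)
  set R := (fun u : ℂ => ‖u‖) '' gaugeSet st₁.S h g with hRdef
  have hzR : P ∈ R := ⟨z, hzE, rfl⟩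
  have hwR : Q ∈ R := ⟨w, hwE, rfl⟩
  have hRne : R.Nonempty := ⟨P, hzR⟩
  have hpairR : ∀ r ∈ R, ∀ r' ∈ R, Real.log (r/r') ≤ d := by
    rintro r ⟨u, hu, rfl⟩ r' ⟨u', hu', rfl⟩
    exact hpairE u hu u' hu'
  have hRpos : ∀ r ∈ R, 0 < r := by
    rintro r ⟨u, hu, rfl⟩
    exact hEpos u hu
  have hRub : ∀ r ∈ R, ∀ r' ∈ R, r ≤ Real.exp d * r' := by
    intro r hr r' hr'
    have h1 := hpairR r hr r' hr'
    have h2 : r/r' ≤ Real.exp d :=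
      (Real.log_le_iff_le_exp (div_pos (hRpos r hr) (hRpos r' hr'))).mp h1
    rw [div_le_iff₀ (hRpos r' hr')] at h2
    linarith [h2]
  have hbddB : BddBelow R := ⟨0, fun r hr => (hRpos r hr).le⟩
  have hbddA : BddAbove R := ⟨Real.exp d * P, fun r hr => hRub r hr P hzR⟩
  set a := sInf R with hadef
  set b := sSup R with hbdef
  have ha_lb : P * Real.exp (-d) ≤ a := by
    apply le_csInf hRne
    intro r hr
    have h1 := hRub P hzR r hr
    rw [Real.exp_neg]
    rw [inv_eq_one_div, mul_comm, div_mul_eq_mul_div, div_le_iff₀ (Real.exp_pos d)]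
    linarith [h1]
  have ha_pos : 0 < a := lt_of_lt_of_le (by positivity) ha_lb
  have haQ : a ≤ Q := csInf_le hbddB hwR
  have haP : a ≤ P := csInf_le hbddB hzR
  have hPb : P ≤ b := le_csSup hbddA hzR
  have hQb : Q ≤ b := le_csSup hbddA hwR
  have hb_pos : 0 < b := lt_of_lt_of_le hP hPb
  have hba : b ≤ Real.exp d * a := by
    apply csSup_le hRne
    intro r hr
    have h1 : r / Real.exp d ≤ a := by
      apply le_csInf hRne
      intro r' hr'
      rw [div_le_iff₀ (Real.exp_pos d)]
      have := hRub r hr r' hr'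
      linarith [this]
    rw [div_le_iff₀ (Real.exp_pos d)] at h1
    linarith [h1]
  have hlogba : Real.log (b/a) ≤ d := by
    rw [Real.log_le_iff_le_exp (div_pos hb_pos ha_pos), div_le_iff₀ ha_pos]
    linarith [hba]
  -- the ε-family estimate
  have hkeyε : ∀ ε : ℝ, 0 < ε → ε < a →
      Real.log (P/Q) ≤ Real.tanh (Θ/4) * Real.log ((b+ε)/(a-ε)) := by
    intro ε hε hεa
    set ζ₁ : ℂ := (((a - ε)/Q : ℝ) : ℂ) * w with hζ₁
    set ζ₂ : ℂ := (((b + ε)/P : ℝ) : ℂ) * z with hζ₂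
    have hζ₁n : ‖ζ₁‖ = a - ε := by
      rw [hζ₁, norm_mul, Complex.norm_real, Real.norm_eq_abs,
        _root_.abs_of_nonneg (div_nonneg (by linarith) hQ.le), ← hQdef,
        div_mul_cancel₀ _ hQ.ne']
    have hζ₂n : ‖ζ₂‖ = b + ε := by
      rw [hζ₂, norm_mul, Complex.norm_real, Real.norm_eq_abs,
        _root_.abs_of_nonneg (div_nonneg (by linarith) hP.le), ← hPdef,
        div_mul_cancel₀ _ hP.ne']
    have hζ₁E : ∀ u ∈ gaugeSet st₁.S h g, u ≠ ζ₁ := by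
      intro u hu hequ
      have h1 : a ≤ ‖u‖ := csInf_le hbddB ⟨u, hu, rfl⟩
      rw [hequ, hζ₁n] at h1
      linarith
    have hζ₂E : ∀ u ∈ gaugeSet st₁.S h g, u ≠ ζ₂ := by
      intro u hu hequ
      have h1 : ‖u‖ ≤ b := le_csSup hbddA ⟨u, hu, rfl⟩
      rw [hequ, hζ₂n] at h1
      linarith
    have hcone_tr : ∀ ζ : ℂ, (∀ u ∈ gaugeSet st₁.S h g, u ≠ ζ) →
        h - cSmul ζ g ∈ complexCone st₁.S := by
      intro ζ hζ
      apply mem_complexCone_of_hat st₁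
      intro q hq
      have hqd := hat_subset_dual hq
      have hqsub : q (h - cSmul ζ g) = q h - ζ * q g := by
        rw [map_sub_of_add hqd.1.1, hqd.1.2.1]
      rw [hqsub]
      intro hcon
      have hqg : q g ≠ 0 := hqd.2 g hg
      have heq2 : q h / q g = ζ := by
        rw [div_eq_iff hqg]
        linear_combination hcon
      exact hζ _ ⟨q, hqd, rfl⟩ heq2
    have hu₁ : h - cSmul ζ₁ g ∈ complexCone st₁.S := hcone_tr ζ₁ hζ₁E
    have hu₂ : h - cSmul ζ₂ g ∈ complexCone st₁.S := hcone_tr ζ₂ hζ₂E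
    -- value of functionals on the translates
    have heva : ∀ (ℓc : B₂ × B₂ → ℂ), ℓc ∈ dualComplexCone st₂.S → ∀ ζ : ℂ,
        ℓc (L (h - cSmul ζ g)) = ℓc (L h) - ζ * ℓc (L g) := by
      intro ℓc hc ζ
      rw [map_sub_of_add hL.1, hL.2.1, map_sub_of_add hc.1.1, hc.1.2.1]
    have hfact : ∀ (ℓc : B₂ × B₂ → ℂ), ℓc ∈ dualComplexCone st₂.S → ∀ ζ : ℂ,
        ‖ℓc (L (h - cSmul ζ g))‖ = ‖ℓc (L g)‖ * ‖ℓc (L h) / ℓc (L g) - ζ‖ := by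
      intro ℓc hc ζ
      rw [heva ℓc hc ζ, ← norm_mul]
      congr 1
      have hcg : ℓc (L g) ≠ 0 := hc.2 _ hLg
      field_simp
    -- nonvanishing of differences
    have hzζ₂ : z - ζ₂ ≠ 0 := sub_ne_zero.mpr (hζ₂E z hzE)
    have hwζ₁ : w - ζ₁ ≠ 0 := sub_ne_zero.mpr (hζ₁E w hwE)
    have hwζ₂ : w - ζ₂ ≠ 0 := sub_ne_zero.mpr (hζ₂E w hwE)
    -- the Δ-pair bound
    have hΔpair : Real.log ((‖z - ζ₁‖ * ‖w - ζ₂‖) / (‖z - ζ₂‖ * ‖w - ζ₁‖)) ≤ Θ := by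
      have hz' : ℓa (L (h - cSmul ζ₁ g)) / ℓa (L (h - cSmul ζ₂ g))
          ∈ gaugeSet st₂.S (L (h - cSmul ζ₁ g)) (L (h - cSmul ζ₂ g)) := ⟨ℓa, hℓa, rfl⟩
      have hw' : ℓb (L (h - cSmul ζ₁ g)) / ℓb (L (h - cSmul ζ₂ g))
          ∈ gaugeSet st₂.S (L (h - cSmul ζ₁ g)) (L (h - cSmul ζ₂ g)) := ⟨ℓb, hℓb, rfl⟩
      have h1 := le_trans (pair_le_delta hz' hw') (hdelta_le_Delta _ hu₁ _ hu₂)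
      rw [← ENNReal.ofReal_toReal hΔfin, ← hΘdef] at h1
      have h2 : ‖ℓa (L (h - cSmul ζ₁ g)) / ℓa (L (h - cSmul ζ₂ g))‖ /
            ‖ℓb (L (h - cSmul ζ₁ g)) / ℓb (L (h - cSmul ζ₂ g))‖
          = (‖z - ζ₁‖ * ‖w - ζ₂‖) / (‖z - ζ₂‖ * ‖w - ζ₁‖) := by
        rw [norm_div, norm_div, hfact ℓa hℓa ζ₁, hfact ℓa hℓa ζ₂,
          hfact ℓb hℓb ζ₁, hfact ℓb hℓb ζ₂, ← hzeq, ← hweq]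
        exact ratio_helper (norm_ne_zero_iff.mpr hag) (norm_ne_zero_iff.mpr hbg)
          (norm_ne_zero_iff.mpr hzζ₂) (norm_ne_zero_iff.mpr hwζ₁) (norm_ne_zero_iff.mpr hwζ₂)
      rw [h2] at h1
      by_cases hc : Real.log ((‖z - ζ₁‖ * ‖w - ζ₂‖) / (‖z - ζ₂‖ * ‖w - ζ₁‖)) ≤ 0
      · linarith
      · exact (ENNReal.ofReal_le_ofReal_iff hΘ0.le).mp h1
    -- distances
    have hn12 : ‖z - ζ₂‖ = b + ε - P := by
      have e : z - ζ₂ = (((1 - (b+ε)/P : ℝ)) : ℂ) * z := by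
        rw [hζ₂]; push_cast; ring
      rw [e, norm_mul, Complex.norm_real, Real.norm_eq_abs, ← hPdef]
      rw [abs_of_nonpos (by
        have : 1 ≤ (b+ε)/P := by rw [le_div_iff₀ hP]; linarith
        linarith)]
      field_simp
      ring
    have hn21 : ‖w - ζ₁‖ = Q - (a - ε) := by
      have e : w - ζ₁ = (((1 - (a-ε)/Q : ℝ)) : ℂ) * w := by
        rw [hζ₁]; push_cast; ring
      rw [e, norm_mul, Complex.norm_real, Real.norm_eq_abs, ← hQdef]
      rw [_root_.abs_of_nonneg (by
        have : (a-ε)/Q ≤ 1 := by rw [div_le_one hQ]; linarith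
        linarith)]
      field_simp
    have hn11 : P - (a - ε) ≤ ‖z - ζ₁‖ := by
      have := norm_sub_norm_le z ζ₁
      rw [hζ₁n] at this
      linarith [this]
    have hn22 : b + ε - Q ≤ ‖w - ζ₂‖ := by
      have := norm_sub_norm_le ζ₂ w
      rw [hζ₂n, norm_sub_rev] at this
      linarith [this]
    have hpos12 : (0:ℝ) < b + ε - P := by linarith
    have hpos21 : (0:ℝ) < Q - (a - ε) := by linarith
    have hpos11 : (0:ℝ) < P - (a - ε) := by linarith
    have hpos22 : (0:ℝ) < b + ε - Q := by linarith
    have hcr : (P - (a-ε))*((b+ε) - Q) ≤ Real.exp Θ * ((Q - (a-ε))*((b+ε) - P)) := by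
      have hD : (0:ℝ) < (b+ε-P)*(Q-(a-ε)) := mul_pos hpos12 hpos21
      have hnum : (P - (a-ε))*((b+ε) - Q) ≤ ‖z - ζ₁‖ * ‖w - ζ₂‖ :=
        mul_le_mul hn11 hn22 hpos22.le (le_trans hpos11.le hn11)
      have hlow : (P - (a-ε))*((b+ε) - Q) / ((b+ε-P)*(Q-(a-ε)))
          ≤ (‖z - ζ₁‖ * ‖w - ζ₂‖) / (‖z - ζ₂‖ * ‖w - ζ₁‖) := by
        rw [hn12, hn21]
        exact (div_le_div_iff_of_pos_right hD).mpr hnum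
      have hR₀pos : 0 < (P-(a-ε))*((b+ε)-Q)/((b+ε-P)*(Q-(a-ε))) :=
        div_pos (mul_pos hpos11 hpos22) hD
      have hlog2 : Real.log ((P-(a-ε))*((b+ε)-Q)/((b+ε-P)*(Q-(a-ε)))) ≤ Θ :=
        le_trans (Real.log_le_log hR₀pos hlow) hΔpair
      have hexp : (P-(a-ε))*((b+ε)-Q)/((b+ε-P)*(Q-(a-ε))) ≤ Real.exp Θ :=
        (Real.log_le_iff_le_exp hR₀pos).mp hlog2
      rw [div_le_iff₀ hD] at hexp
      linarith [hexp, mul_pos hpos12 hpos21,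
        (by ring : Real.exp Θ * ((b+ε-P)*(Q-(a-ε))) = Real.exp Θ * ((Q - (a-ε))*((b+ε) - P)))]
    have := key_ineq (a := a - ε) (b := b + ε) (by linarith) (by linarith) hQP
      (by linarith) hΘ0.le hcr
    exact this
  -- pass to the limit ε → 0
  have hcontf : ContinuousAt (fun ε : ℝ => Real.tanh (Θ/4) * Real.log ((b+ε)/(a-ε))) 0 := by
    apply ContinuousAt.mul continuousAt_const
    have h1 : ContinuousAt (fun ε : ℝ => (b+ε)/(a-ε)) 0 := by
      apply ContinuousAt.div
      · fun_prop
      · fun_prop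
      · simpa using ha_pos.ne'
    have h2 : ContinuousAt Real.log ((fun ε : ℝ => (b+ε)/(a-ε)) 0) := by
      simp only [add_zero, sub_zero]
      exact Real.continuousAt_log (by positivity)
    exact ContinuousAt.comp (g := Real.log) h2 h1
  have hlim : Real.log (P/Q) ≤ Real.tanh (Θ/4) * Real.log (b/a) := by
    have htend : Filter.Tendsto (fun ε : ℝ => Real.tanh (Θ/4) * Real.log ((b+ε)/(a-ε)))
        (nhdsWithin 0 (Set.Ioi 0)) (nhds (Real.tanh (Θ/4) * Real.log (b/a))) := by
      have := hcontf.tendsto.mono_left (nhdsWithin_le_nhds (s := Set.Ioi (0:ℝ)))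
      simpa using this
    apply ge_of_tendsto htend
    filter_upwards [Ioo_mem_nhdsGT_of_mem (Set.mem_Ico.mpr ⟨le_refl (0:ℝ), ha_pos⟩)] with ε hε
    exact hkeyε ε hε.1 hε.2
  have hfin : Real.log (P/Q) ≤ Real.tanh (Θ/4) * d :=
    le_trans hlim (mul_le_mul_of_nonneg_left hlogba (tanh_nonneg' (by positivity)))
  calc ENNReal.ofReal (Real.log (P/Q))
      ≤ ENNReal.ofReal (Real.tanh (Θ/4) * d) := ENNReal.ofReal_le_ofReal hfin
    _ = ENNReal.ofReal (Real.tanh (Θ/4)) * ENNReal.ofReal d :=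
        ENNReal.ofReal_mul (tanh_nonneg' (by positivity))
    _ = ENNReal.ofReal (Real.tanh (Θ/4)) * dE := by rw [hd, ENNReal.ofReal_toReal hdtop]

end ConeSetup
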